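/- Let 0 < ω ≤ 1 and let G(r) = (2π)^{−1/2} ω^{−1} exp(−r²/(2ω²)). Define G^∞(s) = ∑_{k ∈ ℤ} G(s − 2kπ) and G^1(s) = ∑_{k=−1}^{1} G(s − 2kπ). Then for every s ∈ [−π, π], 0 < G^∞(s) − G^1(s) < 2.1 × 10^{−20}. -/

import Mathlib

open Real

private lemma obnd {ω : ℝ} (hω0 : 0 < ω) (hω1 : ω ≤ 1) {x : ℝ} (hx : 2 ≤ x) :
    ω⁻¹ * Real.exp (-x / (2 * ω ^ 2)) ≤ Real.exp (-x / 2) := by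
  have hu : 1 ≤ ω⁻¹ := (one_le_inv₀ hω0).2 hω1
  have hlog : Real.log ω⁻¹ ≤ ω⁻¹ - 1 := Real.log_le_sub_one_of_pos (by positivity)
  have h2 : -x / (2 * ω ^ 2) = -(x / 2) * (ω⁻¹) ^ 2 := by field_simp
  rw [← Real.exp_log (show (0:ℝ) < ω⁻¹ by positivity), ← Real.exp_add, Real.exp_le_exp, h2]
  nlinarith [sq_nonneg (ω⁻¹ - 1), sq_nonneg ω⁻¹,
    mul_nonneg (sub_nonneg.2 hx) (sub_nonneg.2 (one_le_pow₀ hu (n := 2)))]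

private lemma term_pos {ω : ℝ} (hω0 : 0 < ω) (hω1 : ω ≤ 1) {s : ℝ} (hs0 : 0 ≤ s) (hs1 : s ≤ π)
    {k : ℤ} (hk : 2 ≤ k) :
    ω⁻¹ * Real.exp (-(s - 2*k*π)^2 / (2*ω^2)) ≤
      Real.exp (-(9*π^2)/2) * Real.exp (-(6*π^2)) ^ (k-2).toNat := by
  set n : ℕ := (k-2).toNat with hn
  have hkn : (k:ℝ) = (n:ℝ) + 2 := by
    have h : ((k-2).toNat : ℤ) = k - 2 := Int.toNat_of_nonneg (by omega)
    have : ((n:ℤ):ℝ) = ((k-2 : ℤ):ℝ) := by rw [← h]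
    push_cast at this; linarith
  have hπ := Real.pi_pos
  have h1 : (2*(n:ℝ)+3)*π ≤ 2*k*π - s := by rw [hkn]; nlinarith
  have h0 : (0:ℝ) ≤ (2*(n:ℝ)+3)*π := by positivity
  have h2 : ((2*(n:ℝ)+3)*π)^2 ≤ (s - 2*k*π)^2 := by
    have := pow_le_pow_left₀ h0 h1 2
    calc ((2*(n:ℝ)+3)*π)^2 ≤ (2*k*π - s)^2 := this
      _ = (s - 2*k*π)^2 := by ring
  have hd : 9*π^2 + 12*π^2*(n:ℝ) ≤ (s - 2*k*π)^2 := by nlinarith [sq_nonneg ((n:ℝ)*π)]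
  have h2x : (2:ℝ) ≤ (s-2*k*π)^2 := by
    nlinarith [Real.pi_gt_three, mul_nonneg (sq_nonneg π) (Nat.cast_nonneg (α := ℝ) n)]
  calc ω⁻¹ * Real.exp (-(s - 2*k*π)^2 / (2*ω^2)) ≤ Real.exp (-(s-2*k*π)^2/2) :=
        obnd hω0 hω1 h2x
    _ ≤ Real.exp (-(9*π^2)/2 + (n:ℝ) * (-(6*π^2))) := by
        apply Real.exp_le_exp.2; nlinarith
    _ = Real.exp (-(9*π^2)/2) * Real.exp (-(6*π^2)) ^ n := by
        rw [Real.exp_add, Real.exp_nat_mul]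

private lemma term_neg {ω : ℝ} (hω0 : 0 < ω) (hω1 : ω ≤ 1) {s : ℝ} (hs0 : 0 ≤ s) (hs1 : s ≤ π)
    {k : ℤ} (hk : k ≤ -2) :
    ω⁻¹ * Real.exp (-(s - 2*k*π)^2 / (2*ω^2)) ≤
      (Real.exp (-(9*π^2)/2) * Real.exp (-(7*π^2)/2)) * Real.exp (-(6*π^2)) ^ (-k-2).toNat := by
  set n : ℕ := (-k-2).toNat with hn
  have hkn : (k:ℝ) = -((n:ℝ) + 2) := by
    have h : ((-k-2).toNat : ℤ) = -k - 2 := Int.toNat_of_nonneg (by omega)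
    have : ((n:ℤ):ℝ) = ((-k-2 : ℤ):ℝ) := by rw [← h]
    push_cast at this; linarith
  have hπ := Real.pi_pos
  have h1 : (2*(n:ℝ)+4)*π ≤ s - 2*k*π := by rw [hkn]; nlinarith
  have h0 : (0:ℝ) ≤ (2*(n:ℝ)+4)*π := by positivity
  have h2 : ((2*(n:ℝ)+4)*π)^2 ≤ (s - 2*k*π)^2 := pow_le_pow_left₀ h0 h1 2
  have hd : 16*π^2 + 12*π^2*(n:ℝ) ≤ (s - 2*k*π)^2 := by nlinarith [sq_nonneg ((n:ℝ)*π)]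
  have h2x : (2:ℝ) ≤ (s-2*k*π)^2 := by
    nlinarith [Real.pi_gt_three, mul_nonneg (sq_nonneg π) (Nat.cast_nonneg (α := ℝ) n)]
  calc ω⁻¹ * Real.exp (-(s - 2*k*π)^2 / (2*ω^2)) ≤ Real.exp (-(s-2*k*π)^2/2) :=
        obnd hω0 hω1 h2x
    _ ≤ Real.exp ((-(9*π^2)/2 + -(7*π^2)/2) + (n:ℝ) * (-(6*π^2))) := by
        apply Real.exp_le_exp.2; nlinarith
    _ = (Real.exp (-(9*π^2)/2) * Real.exp (-(7*π^2)/2)) * Real.exp (-(6*π^2)) ^ n := by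
        rw [Real.exp_add, Real.exp_add, Real.exp_nat_mul]

private lemma dist_sq {s : ℝ} (hs0 : -π ≤ s) (hs1 : s ≤ π) (n : ℕ) :
    (n:ℝ) * (π^2/2) ≤ (s - 2*n*π)^2 / 2 := by
  have hπ := Real.pi_pos
  rcases Nat.eq_zero_or_pos n with h | h
  · subst h; simp; positivity
  · have h1 : (1:ℝ) ≤ (n:ℝ) := by exact_mod_cast h
    have h2 : (2*(n:ℝ)-1)*π ≤ 2*n*π - s := by nlinarith
    have h0 : (0:ℝ) ≤ (2*(n:ℝ)-1)*π := by nlinarith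
    have h3 : ((2*(n:ℝ)-1)*π)^2 ≤ (s - 2*n*π)^2 := by
      calc ((2*(n:ℝ)-1)*π)^2 ≤ (2*n*π - s)^2 := pow_le_pow_left₀ h0 h2 2
        _ = (s - 2*n*π)^2 := by ring
    nlinarith [sq_nonneg (((n:ℝ)-1)*π), sq_nonneg π]

private lemma summ {ω : ℝ} (hω0 : 0 < ω) (hω1 : ω ≤ 1) {s : ℝ}
    (hs0 : -π ≤ s) (hs1 : s ≤ π) (G : ℝ → ℝ)
    (hG : ∀ r : ℝ, G r = (Real.sqrt (2 * π))⁻¹ * ω⁻¹ * Real.exp (-r ^ 2 / (2 * ω ^ 2))) :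
    Summable (fun k : ℤ => G (s - 2*k*π)) := by
  have hπ := Real.pi_pos
  have key : ∀ t : ℝ, -π ≤ t → t ≤ π → ∀ n : ℕ,
      G (t - 2*n*π) ≤ ((Real.sqrt (2*π))⁻¹ * ω⁻¹) * Real.exp (-(π^2/2)) ^ n := by
    intro t ht0 ht1 n
    rw [hG, ← Real.exp_nat_mul]
    have hd := dist_sq ht0 ht1 n
    have hω2 : 2 * ω^2 ≤ 2 := by nlinarith
    have hdiv : (t - 2*n*π)^2 / 2 ≤ (t - 2*n*π)^2 / (2*ω^2) :=
      div_le_div_of_nonneg_left (sq_nonneg _) (by positivity) hω2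
    have hmono : Real.exp (-(t - 2*(n:ℝ)*π)^2 / (2*ω^2)) ≤ Real.exp ((n:ℝ) * -(π^2/2)) := by
      apply Real.exp_le_exp.2
      have h : (n:ℝ) * -(π^2/2) = -((n:ℝ) * (π^2/2)) := by ring
      rw [h, neg_div]
      linarith
    exact mul_le_mul_of_nonneg_left hmono (by positivity)
  have hge : Summable (fun n : ℕ => ((Real.sqrt (2*π))⁻¹ * ω⁻¹) * Real.exp (-(π^2/2)) ^ n) := by
    apply Summable.mul_left
    exact summable_geometric_of_lt_one (Real.exp_nonneg _)
      (Real.exp_lt_one_iff.2 (neg_lt_zero.2 (by positivity)))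
  have hGpos : ∀ r, 0 < G r := by
    intro r; rw [hG]
    have h1 : 0 < Real.sqrt (2*π) := Real.sqrt_pos.2 (by positivity)
    positivity
  have hGeven : ∀ x, G (-x) = G x := by
    intro x; simp [hG, neg_sq]
  apply Summable.of_nat_of_neg
  · apply Summable.of_nonneg_of_le (fun n => (hGpos _).le) _ hge
    intro n
    have h1 : s - 2*(((n:ℤ)):ℝ)*π = s - 2*(n:ℝ)*π := by push_cast; ring
    rw [h1]
    exact key s hs0 hs1 n
  · apply Summable.of_nonneg_of_le (fun n => (hGpos _).le) _ hge
    intro n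
    have h1 : s - 2*(((-(n:ℤ)):ℤ):ℝ)*π = -((-s) - 2*(n:ℝ)*π) := by push_cast; ring
    rw [h1, hGeven]
    exact key (-s) (by linarith) (by linarith) n

private lemma exp_big : (1.91e19 : ℝ) ≤ Real.exp (9 * π ^ 2 / 2) := by
  have hpi : (3.141592 : ℝ) < π := Real.pi_gt_d6
  have h44 : (44.4132 : ℝ) ≤ 9 * π ^ 2 / 2 := by nlinarith
  have e1 : (2.7182818283 : ℝ) ≤ Real.exp 1 := le_of_lt Real.exp_one_gt_d9
  have e44 : (2.7182818283 : ℝ) ^ 44 ≤ Real.exp 44 := by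
    calc (2.7182818283 : ℝ) ^ 44 ≤ (Real.exp 1) ^ 44 :=
          pow_le_pow_left₀ (by norm_num) e1 44
      _ = Real.exp 44 := by
          rw [← Real.exp_nat_mul]; norm_num
  have e2 : (1.025825 : ℝ) ^ 16 ≤ Real.exp 0.4132 := by
    have h := Real.add_one_le_exp (0.025825 : ℝ)
    calc (1.025825 : ℝ) ^ 16 ≤ (Real.exp 0.025825) ^ 16 :=
          pow_le_pow_left₀ (by norm_num) (by linarith) 16
      _ = Real.exp (16 * 0.025825) := (Real.exp_nat_mul _ 16).symm
      _ = Real.exp 0.4132 := by norm_num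
  calc (1.91e19 : ℝ) ≤ (2.7182818283 : ℝ) ^ 44 * (1.025825 : ℝ) ^ 16 := by norm_num
    _ ≤ Real.exp 44 * Real.exp 0.4132 :=
        mul_le_mul e44 e2 (by positivity) (Real.exp_nonneg _)
    _ = Real.exp 44.4132 := by rw [← Real.exp_add]; norm_num
    _ ≤ _ := Real.exp_le_exp.2 h44

private lemma exp_small : Real.exp (-(9 * π ^ 2) / 2) ≤ 5.236e-20 := by
  have h : (1.91e19 : ℝ) ≤ Real.exp (9 * π ^ 2 / 2) := exp_big
  rw [show -(9 * π ^ 2) / 2 = -(9 * π ^ 2 / 2) by ring, Real.exp_neg]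
  rw [inv_le_comm₀ (Real.exp_pos _) (by norm_num)]
  calc (5.236e-20:ℝ)⁻¹ ≤ 1.91e19 := by norm_num
    _ ≤ _ := h

private lemma exp7 : Real.exp (-(7 * π ^ 2) / 2) ≤ 0.001 := by
  have hpi : (3:ℝ) < π := Real.pi_gt_three
  have e1 : (2.7182818283 : ℝ) ≤ Real.exp 1 := le_of_lt Real.exp_one_gt_d9
  have h : Real.exp (-(7 * π ^ 2) / 2) ≤ Real.exp (-7) := by
    apply Real.exp_le_exp.2; nlinarith
  refine h.trans ?_
  rw [Real.exp_neg, inv_le_comm₀ (Real.exp_pos _) (by norm_num)]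
  calc ((0.001:ℝ))⁻¹ ≤ (2.7182818283 : ℝ) ^ 7 := by norm_num
    _ ≤ (Real.exp 1) ^ 7 := pow_le_pow_left₀ (by norm_num) e1 7
    _ = Real.exp 7 := by rw [← Real.exp_nat_mul]; norm_num

private lemma Qsmall : Real.exp (-(6 * π ^ 2)) ≤ 0.0001 := by
  have hpi : (3:ℝ) < π := Real.pi_gt_three
  have e1 : (2.7182818283 : ℝ) ≤ Real.exp 1 := le_of_lt Real.exp_one_gt_d9
  have h : Real.exp (-(6 * π ^ 2)) ≤ Real.exp (-10) := by
    apply Real.exp_le_exp.2; nlinarith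
  refine h.trans ?_
  rw [Real.exp_neg, inv_le_comm₀ (Real.exp_pos _) (by norm_num)]
  calc ((0.0001:ℝ))⁻¹ ≤ (2.7182818283 : ℝ) ^ 10 := by norm_num
    _ ≤ (Real.exp 1) ^ 10 := pow_le_pow_left₀ (by norm_num) e1 10
    _ = Real.exp 10 := by rw [← Real.exp_nat_mul]; norm_num

private lemma sqrt2pi : (2.5066 : ℝ) ≤ Real.sqrt (2 * π) := by
  have hpi : (3.141592 : ℝ) < π := Real.pi_gt_d6
  rw [show (2.5066:ℝ) = Real.sqrt (2.5066^2) from (Real.sqrt_sq (by norm_num)).symm]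
  exact Real.sqrt_le_sqrt (by nlinarith)

private lemma c0bnd : (Real.sqrt (2 * π))⁻¹ ≤ 0.398947 := by
  rw [inv_le_comm₀ (lt_of_lt_of_le (by norm_num) sqrt2pi) (by norm_num)]
  exact le_trans (by norm_num) sqrt2pi

private theorem auxT (ω : ℝ) (hω0 : 0 < ω) (hω1 : ω ≤ 1) (G : ℝ → ℝ)
    (hG : ∀ r : ℝ, G r = (Real.sqrt (2 * π))⁻¹ * ω⁻¹ * Real.exp (-r ^ 2 / (2 * ω ^ 2)))
    {s : ℝ} (hs0 : 0 ≤ s) (hs1 : s ≤ π) :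
    0 < (∑' k : ℤ, G (s - 2 * k * π)) - ∑ k ∈ Finset.Icc (-1 : ℤ) 1, G (s - 2 * k * π) ∧
      (∑' k : ℤ, G (s - 2 * k * π)) - ∑ k ∈ Finset.Icc (-1 : ℤ) 1, G (s - 2 * k * π)
        < 2.1e-20 := by
  have hπ := Real.pi_pos
  have hsqrt : 0 < Real.sqrt (2*π) := Real.sqrt_pos.2 (by positivity)
  have hGpos : ∀ r, 0 < G r := by intro r; rw [hG]; positivity
  have hsum : Summable (fun k : ℤ => G (s - 2*k*π)) :=
    summ hω0 hω1 (by linarith) hs1 G hG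
  have key := Summable.sum_add_tsum_subtype_compl hsum (Finset.Icc (-1 : ℤ) 1)
  have hdiff : (∑' k : ℤ, G (s - 2 * k * π)) - ∑ k ∈ Finset.Icc (-1 : ℤ) 1, G (s - 2 * k * π)
      = ∑' (x : {k : ℤ // k ∉ Finset.Icc (-1 : ℤ) 1}), G (s - 2 * (x : ℤ) * π) := by
    linarith [key]
  rw [hdiff]
  constructor
  · exact Summable.tsum_pos (hsum.subtype _) (fun i => (hGpos _).le) ⟨2, by decide⟩ (hGpos _)
  · refine lt_of_le_of_lt (tsum_le_of_sum_le' (by norm_num : (0:ℝ) ≤ 2.092e-20) ?_)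
      (by norm_num)
    intro S
    set c0 := (Real.sqrt (2*π))⁻¹ with hc0def
    have hc0 : 0 ≤ c0 := by positivity
    have hc0b : c0 ≤ 0.398947 := c0bnd
    set E3 := Real.exp (-(9*π^2)/2) with hE3def
    have hE3 : 0 < E3 := Real.exp_pos _
    have hE3b : E3 ≤ 5.236e-20 := exp_small
    set Q := Real.exp (-(6*π^2)) with hQdef
    have hQ0 : 0 ≤ Q := (Real.exp_pos _).le
    have hQ1 : Q ≤ 0.0001 := Qsmall
    have hQlt : Q < 1 := lt_of_le_of_lt hQ1 (by norm_num)
    have hgeom : ∀ T : Finset ℕ, ∑ n ∈ T, Q^n ≤ 1.0002 := by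
      intro T
      have h1 : ∑ n ∈ T, Q^n ≤ ∑' n : ℕ, Q^n :=
        Summable.sum_le_tsum T (fun i _ => by positivity) (summable_geometric_of_lt_one hQ0 hQlt)
      rw [tsum_geometric_of_lt_one hQ0 hQlt] at h1
      have h2 : (0:ℝ) < 1 - Q := by linarith
      have h3 : (1-Q)⁻¹ ≤ 1.0002 := by
        rw [inv_le_comm₀ h2 (by norm_num)]
        norm_num
        linarith
      linarith
    have himg : ∑ i ∈ S, G (s - 2 * ((i : ℤ) : ℝ) * π)
        = ∑ k ∈ S.image Subtype.val, G (s - 2 * (k : ℝ) * π) := by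
      rw [Finset.sum_image (by intro x _ y _ h; exact Subtype.ext h)]
    rw [himg]
    set T := S.image Subtype.val with hTdef
    have hT : ∀ k ∈ T, k ∉ Finset.Icc (-1:ℤ) 1 := by
      intro k hk
      rw [hTdef, Finset.mem_image] at hk
      obtain ⟨⟨x, hx⟩, _, rfl⟩ := hk
      exact hx
    rw [← Finset.sum_filter_add_sum_filter_not T (fun k => 0 ≤ k)
      (fun k => G (s - 2*(k:ℝ)*π))]
    have hb1 : (∑ k ∈ T.filter (fun k => 0 ≤ k), G (s - 2*(k:ℝ)*π)) ≤ (c0 * E3) * 1.0002 := by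
      have hmem : ∀ k ∈ T.filter (fun k => 0 ≤ k), 2 ≤ k := by
        intro k hk
        have h1 := hT k (Finset.mem_filter.1 hk).1
        have h2 := (Finset.mem_filter.1 hk).2
        have h3 : ¬(-1 ≤ k ∧ k ≤ 1) := by simpa [Finset.mem_Icc] using h1
        omega
      have step : (∑ k ∈ T.filter (fun k => 0 ≤ k), G (s - 2*(k:ℝ)*π))
          ≤ ∑ k ∈ T.filter (fun k => 0 ≤ k), (c0 * E3) * Q ^ (k-2).toNat := by
        apply Finset.sum_le_sum
        intro k hk
        rw [hG, mul_assoc]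
        calc c0 * (ω⁻¹ * Real.exp (-(s - 2*(k:ℝ)*π) ^ 2 / (2 * ω ^ 2)))
            ≤ c0 * (E3 * Q ^ (k-2).toNat) :=
              mul_le_mul_of_nonneg_left (term_pos hω0 hω1 hs0 hs1 (hmem k hk)) hc0
          _ = (c0 * E3) * Q ^ (k-2).toNat := by ring
      refine step.trans ?_
      rw [← Finset.mul_sum]
      apply mul_le_mul_of_nonneg_left _ (mul_nonneg hc0 hE3.le)
      have him : (∑ k ∈ T.filter (fun k => 0 ≤ k), Q^((k-2).toNat))
          = ∑ n ∈ (T.filter (fun k => 0 ≤ k)).image (fun k => (k-2).toNat), Q^n := by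
        rw [Finset.sum_image]
        intro x hx y hy h
        have h1 := hmem x hx
        have h2 := hmem y hy
        simp only at h
        omega
      rw [him]
      exact hgeom _
    have hb2 : (∑ k ∈ T.filter (fun k => ¬ 0 ≤ k), G (s - 2*(k:ℝ)*π))
        ≤ ((c0 * E3) * 0.001) * 1.0002 := by
      have hmem : ∀ k ∈ T.filter (fun k => ¬ 0 ≤ k), k ≤ -2 := by
        intro k hk
        have h1 := hT k (Finset.mem_filter.1 hk).1
        have h2 := (Finset.mem_filter.1 hk).2
        have h3 : ¬(-1 ≤ k ∧ k ≤ 1) := by simpa [Finset.mem_Icc] using h1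
        omega
      have step : (∑ k ∈ T.filter (fun k => ¬ 0 ≤ k), G (s - 2*(k:ℝ)*π))
          ≤ ∑ k ∈ T.filter (fun k => ¬ 0 ≤ k), ((c0 * E3) * 0.001) * Q ^ (-k-2).toNat := by
        apply Finset.sum_le_sum
        intro k hk
        rw [hG, mul_assoc]
        calc c0 * (ω⁻¹ * Real.exp (-(s - 2*(k:ℝ)*π) ^ 2 / (2 * ω ^ 2)))
            ≤ c0 * ((E3 * Real.exp (-(7*π^2)/2)) * Q ^ (-k-2).toNat) :=
              mul_le_mul_of_nonneg_left (term_neg hω0 hω1 hs0 hs1 (hmem k hk)) hc0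
          _ ≤ c0 * ((E3 * 0.001) * Q ^ (-k-2).toNat) := by
              apply mul_le_mul_of_nonneg_left _ hc0
              apply mul_le_mul_of_nonneg_right _ (pow_nonneg hQ0 _)
              exact mul_le_mul_of_nonneg_left exp7 hE3.le
          _ = ((c0 * E3) * 0.001) * Q ^ (-k-2).toNat := by ring
      refine step.trans ?_
      rw [← Finset.mul_sum]
      apply mul_le_mul_of_nonneg_left _ (by positivity)
      have him : (∑ k ∈ T.filter (fun k => ¬ 0 ≤ k), Q^((-k-2).toNat))
          = ∑ n ∈ (T.filter (fun k => ¬ 0 ≤ k)).image (fun k => (-k-2).toNat), Q^n := by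
        rw [Finset.sum_image]
        intro x hx y hy h
        have h1 := hmem x hx
        have h2 := hmem y hy
        simp only at h
        omega
      rw [him]
      exact hgeom _
    have hA : c0 * E3 ≤ 0.398947 * 5.236e-20 :=
      mul_le_mul hc0b hE3b hE3.le (by norm_num)
    nlinarith [mul_nonneg hc0 hE3.le]

/-- For `0 < ω ≤ 1`, the periodized Gaussian `G^∞(s) = ∑_{k∈ℤ} G(s − 2kπ)` differs from its
three-term truncation `G^1(s) = ∑_{k=−1}^{1} G(s − 2kπ)` by at most `2.1 × 10^{−20}` on
`[−π, π]`, and the difference is strictly positive. -/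
theorem stmt_18 (ω : ℝ) (hω0 : 0 < ω) (hω1 : ω ≤ 1) (G : ℝ → ℝ)
    (hG : ∀ r : ℝ, G r = (Real.sqrt (2 * π))⁻¹ * ω⁻¹ * Real.exp (-r ^ 2 / (2 * ω ^ 2))) :
    ∀ s ∈ Set.Icc (-π) π,
      0 < (∑' k : ℤ, G (s - 2 * k * π)) - ∑ k ∈ Finset.Icc (-1 : ℤ) 1, G (s - 2 * k * π) ∧
      (∑' k : ℤ, G (s - 2 * k * π)) - ∑ k ∈ Finset.Icc (-1 : ℤ) 1, G (s - 2 * k * π)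
        < 2.1e-20 := by
  intro s hs
  obtain ⟨hs0, hs1⟩ := hs
  rcases le_or_gt 0 s with h | h
  · exact auxT ω hω0 hω1 G hG h hs1
  · have hGeven : ∀ x : ℝ, G (-x) = G x := by
      intro x; simp [hG, neg_sq]
    have h0 : 0 ≤ -s := by linarith
    have h1 : -s ≤ π := by linarith
    have H := auxT ω hω0 hω1 G hG h0 h1
    have e1 : (∑' k : ℤ, G (s - 2 * k * π)) = ∑' k : ℤ, G ((-s) - 2 * k * π) := by
      have ht := (Equiv.neg ℤ).tsum_eq (fun k : ℤ => G ((-s) - 2 * (k:ℝ) * π))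
      simp only [Equiv.neg_apply] at ht
      rw [← ht]
      apply tsum_congr
      intro k
      have harg : (-s) - 2 * (((-k : ℤ)):ℝ) * π = -(s - 2 * (k:ℝ) * π) := by
        push_cast; ring
      rw [harg, hGeven]
    have e2 : (∑ k ∈ Finset.Icc (-1 : ℤ) 1, G (s - 2 * k * π))
        = ∑ k ∈ Finset.Icc (-1 : ℤ) 1, G ((-s) - 2 * k * π) := by
      apply Finset.sum_equiv (Equiv.neg ℤ)
      · intro i; simp only [Finset.mem_Icc, Equiv.neg_apply]; omega
      · intro i _
        have harg : (-s) - 2 * (((-i : ℤ)):ℝ) * π = -(s - 2 * (i:ℝ) * π) := by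
          push_cast; ring
        simp only [Equiv.neg_apply]
        rw [harg, hGeven]
    rw [e1, e2]
    exact H
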